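/- Let t > 0 and let f : [0,t] → [0,1] be continuous and strictly increasing on (0,t). For θ ∈ (θ_{f(0)}, 2π − θ_{f(0)}), set u(θ) = t if f(t) ≤ sin(θ/2), and otherwise let u(θ) be the unique s ∈ (0,t) with f(s) = sin(θ/2). Then for every continuous function g : ∂D → ℂ, (1/t) ∫_0^t (∫_{∂D} g dν_{f(s)}) ds = ∫_{θ_{f(0)}}^{2π − θ_{f(0)}} g(e^{iθ}) · D_t(θ) dθ, where D_t(θ) = (1/(2πt)) ∫_0^{u(θ)} sin(θ/2)/√(sin²(θ/2) − f(s)²) ds. In particular, the average measure σ_t = (1/t)∫_0^t ν_{f(s)} ds is absolutely continuous with density D_t and support {e^{iθ} : θ_{f(0)} ≤ θ ≤ 2π − θ_{f(0)}}. -/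

import Mathlib

open Filter MeasureTheory

noncomputable section

lemma lt_sin_iff' {a x : ℝ} (ha0 : 0 ≤ a) (ha1 : a ≤ 1) (hx : x ∈ Set.Ioo 0 Real.pi) :
    a < Real.sin x ↔ Real.arcsin a < x ∧ x < Real.pi - Real.arcsin a := by
  have hpi := Real.pi_pos
  have harc0 : 0 ≤ Real.arcsin a := Real.arcsin_nonneg.2 ha0
  have harcpi : Real.arcsin a ≤ Real.pi / 2 := Real.arcsin_le_pi_div_two a
  obtain ⟨hxa, hxb⟩ := hx
  have hsx : Real.sin (Real.pi - x) = Real.sin x := Real.sin_pi_sub x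
  constructor
  · intro h
    constructor
    · rcases le_or_gt x (Real.pi / 2) with hx2 | hx2
      · exact (Real.arcsin_lt_iff_lt_sin' ⟨by linarith [hxa], hx2⟩).2 h
      · linarith
    · rcases le_or_gt (Real.pi / 2) x with hx2 | hx2
      · have : Real.arcsin a < Real.pi - x :=
          (Real.arcsin_lt_iff_lt_sin' ⟨by linarith, by linarith⟩).2 (hsx ▸ h)
        linarith
      · linarith
  · rintro ⟨h1, h2⟩
    rcases le_or_gt x (Real.pi / 2) with hx2 | hx2
    · exact (Real.arcsin_lt_iff_lt_sin' ⟨by linarith [hxa], hx2⟩).1 h1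
    · have : a < Real.sin (Real.pi - x) :=
        (Real.arcsin_lt_iff_lt_sin' ⟨by linarith, by linarith⟩).1 (by linarith)
      rwa [hsx] at this

lemma density_FTC (a : ℝ) (ha0 : 0 ≤ a) (ha1 : a < 1) :
    IntegrableOn (fun θ => Real.sin (θ/2) / Real.sqrt (Real.sin (θ/2)^2 - a^2))
      (Set.Ioc (2*Real.arcsin a) (2*Real.pi - 2*Real.arcsin a)) ∧
    ∫ θ in (2*Real.arcsin a)..(2*Real.pi - 2*Real.arcsin a),
      Real.sin (θ/2) / Real.sqrt (Real.sin (θ/2)^2 - a^2) = 2*Real.pi := by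
  have hpi := Real.pi_pos
  have harc0 : 0 ≤ Real.arcsin a := Real.arcsin_nonneg.2 ha0
  have harcpi : Real.arcsin a ≤ Real.pi / 2 := Real.arcsin_le_pi_div_two a
  set c : ℝ := Real.sqrt (1 - a^2) with hcdef
  have hc : 0 < c := Real.sqrt_pos.2 (by nlinarith)
  have hc2 : c^2 = 1 - a^2 := Real.sq_sqrt (by nlinarith)
  set G : ℝ → ℝ := fun θ => -2 * Real.arcsin (Real.cos (θ/2) / c) with hGdef
  have hle : 2*Real.arcsin a ≤ 2*Real.pi - 2*Real.arcsin a := by linarith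
  have hGcont : ContinuousOn G (Set.Icc (2*Real.arcsin a) (2*Real.pi - 2*Real.arcsin a)) := by
    apply Continuous.continuousOn
    exact continuous_const.mul (Real.continuous_arcsin.comp
      ((Real.continuous_cos.comp (continuous_id.div_const 2)).div_const c))
  have hderiv : ∀ θ ∈ Set.Ioo (2*Real.arcsin a) (2*Real.pi - 2*Real.arcsin a),
      HasDerivAt G (Real.sin (θ/2) / Real.sqrt (Real.sin (θ/2)^2 - a^2)) θ := by
    intro θ hθ
    have hx : θ/2 ∈ Set.Ioo 0 Real.pi := ⟨by linarith [hθ.1], by linarith [hθ.2]⟩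
    have hsin : a < Real.sin (θ/2) := by
      rw [lt_sin_iff' ha0 ha1.le hx]
      exact ⟨by linarith [hθ.1], by linarith [hθ.2]⟩
    have hs2 : 0 < Real.sin (θ/2)^2 - a^2 := by nlinarith
    have hcos2 : Real.cos (θ/2)^2 < c^2 := by
      have := Real.sin_sq_add_cos_sq (θ/2); nlinarith
    have habs : |Real.cos (θ/2) / c| < 1 := by
      rw [abs_div, abs_of_pos hc, div_lt_one hc]
      have : |Real.cos (θ/2)|^2 < c^2 := by rwa [sq_abs]
      nlinarith [abs_nonneg (Real.cos (θ/2))]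
    have hne1 : Real.cos (θ/2) / c ≠ -1 := by
      intro h; rw [h] at habs; simp at habs
    have hne2 : Real.cos (θ/2) / c ≠ 1 := by
      intro h; rw [h] at habs; simp at habs
    have h1 : HasDerivAt (fun θ : ℝ => θ/2) (1/2) θ := (hasDerivAt_id θ).div_const 2
    have h2 : HasDerivAt (fun θ : ℝ => Real.cos (θ/2)) (-Real.sin (θ/2) * (1/2)) θ :=
      by have := (Real.hasDerivAt_cos (θ/2)).comp θ h1; exact this
    have h3 : HasDerivAt (fun θ : ℝ => Real.cos (θ/2) / c) (-Real.sin (θ/2) * (1/2) / c) θ :=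
      h2.div_const c
    have h4 := (Real.hasDerivAt_arcsin hne1 hne2).comp θ h3
    have h5 := h4.const_mul (-2 : ℝ)
    have hsqrt : Real.sqrt (1 - (Real.cos (θ/2)/c)^2)
        = Real.sqrt (Real.sin (θ/2)^2 - a^2) / c := by
      have heq : 1 - (Real.cos (θ/2)/c)^2 = (Real.sin (θ/2)^2 - a^2) / c^2 := by
        have := Real.sin_sq_add_cos_sq (θ/2)
        field_simp
        nlinarith
      rw [heq, Real.sqrt_div hs2.le, Real.sqrt_sq hc.le]
    have hspos : 0 < Real.sqrt (Real.sin (θ/2)^2 - a^2) := Real.sqrt_pos.2 hs2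
    refine h5.congr_deriv ?_
    rw [hsqrt]
    field_simp
  have hpos : ∀ θ ∈ Set.Ioo (2*Real.arcsin a) (2*Real.pi - 2*Real.arcsin a),
      0 ≤ Real.sin (θ/2) / Real.sqrt (Real.sin (θ/2)^2 - a^2) := by
    intro θ hθ
    have hx : 0 ≤ Real.sin (θ/2) :=
      Real.sin_nonneg_of_nonneg_of_le_pi (by linarith [hθ.1]) (by linarith [hθ.2])
    positivity
  have hint : IntegrableOn (fun θ => Real.sin (θ/2) / Real.sqrt (Real.sin (θ/2)^2 - a^2))
      (Set.Ioc (2*Real.arcsin a) (2*Real.pi - 2*Real.arcsin a)) :=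
    intervalIntegral.integrableOn_deriv_of_nonneg hGcont hderiv hpos
  refine ⟨hint, ?_⟩
  have hii : IntervalIntegrable (fun θ => Real.sin (θ/2) / Real.sqrt (Real.sin (θ/2)^2 - a^2))
      volume (2*Real.arcsin a) (2*Real.pi - 2*Real.arcsin a) :=
    (intervalIntegrable_iff_integrableOn_Ioc_of_le hle).2 hint
  rw [intervalIntegral.integral_eq_sub_of_hasDeriv_right_of_le hle hGcont
    (fun θ hθ => (hderiv θ hθ).hasDerivWithinAt) hii]
  have e1 : Real.cos ((2*Real.arcsin a)/2) = c := by
    rw [show (2*Real.arcsin a)/2 = Real.arcsin a by ring, Real.cos_arcsin]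
  have e2 : Real.cos ((2*Real.pi - 2*Real.arcsin a)/2) = -c := by
    rw [show (2*Real.pi - 2*Real.arcsin a)/2 = Real.pi - Real.arcsin a by ring,
      Real.cos_pi_sub, Real.cos_arcsin]
  rw [hGdef]
  simp only [e1, e2, neg_div, div_self hc.ne', Real.arcsin_neg, Real.arcsin_one]
  ring


def thetaA (a : ℝ) : ℝ := 2 * Real.arcsin a

/-- Integral of `g` against the equilibrium measure `ν_a` of the circular arc `Γ_a`
(for `a = 1`, `ν_1 = δ_{-1}`). -/
def nuInt (a : ℝ) (g : ℂ → ℂ) : ℂ :=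
  if a = 1 then g (-1)
  else ∫ θ in thetaA a..(2 * Real.pi - thetaA a),
    ((1 / (2 * Real.pi) * Real.sin (θ / 2) /
        Real.sqrt (Real.cos (thetaA a / 2) ^ 2 - Real.cos (θ / 2) ^ 2) : ℝ) : ℂ) *
      g (Complex.exp (θ * Complex.I))

/-- For a continuous, strictly increasing sampling function `f : [0,t] → [0,1]`, the
averaged equilibrium measure `(1/t)∫_0^t ν_{f(s)} ds` is absolutely continuous with the
explicit density `D_t` on the arc `{e^{iθ} : θ_{f(0)} ≤ θ ≤ 2π - θ_{f(0)}}`. -/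
theorem stmt17 (t : ℝ) (ht : 0 < t) (f : ℝ → ℝ)
    (hmap : ∀ s ∈ Set.Icc (0 : ℝ) t, f s ∈ Set.Icc (0 : ℝ) 1)
    (hcont : ContinuousOn f (Set.Icc (0 : ℝ) t))
    (hmono : StrictMonoOn f (Set.Ioo (0 : ℝ) t))
    (u : ℝ → ℝ)
    (hu : ∀ θ ∈ Set.Ioo (thetaA (f 0)) (2 * Real.pi - thetaA (f 0)),
      (f t ≤ Real.sin (θ / 2) → u θ = t) ∧
      (Real.sin (θ / 2) < f t → u θ ∈ Set.Ioo (0 : ℝ) t ∧ f (u θ) = Real.sin (θ / 2)))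
    (g : ℂ → ℂ) (hg : Continuous g) :
    (t : ℂ)⁻¹ * (∫ s in (0 : ℝ)..t, nuInt (f s) g)
      = ∫ θ in thetaA (f 0)..(2 * Real.pi - thetaA (f 0)),
          g (Complex.exp (θ * Complex.I)) *
            (((1 / (2 * Real.pi * t)) *
              ∫ s in (0 : ℝ)..(u θ),
                Real.sin (θ / 2) / Real.sqrt (Real.sin (θ / 2) ^ 2 - f s ^ 2) : ℝ) : ℂ) := by
  classical
  have hpi := Real.pi_pos
  -- clamped version of f, continuous on all of ℝ
  set cl : ℝ → ℝ := fun s => min (max s 0) t with hcl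
  have hclmem : ∀ s, cl s ∈ Set.Icc (0:ℝ) t :=
    fun s => ⟨le_min (le_max_right s 0) ht.le, min_le_right _ t⟩
  have hclc : Continuous cl := (continuous_id.max continuous_const).min continuous_const
  set f0 : ℝ → ℝ := fun s => f (cl s) with hf0def
  have hf0c : Continuous f0 := hcont.comp_continuous hclc hclmem
  have hf0eq : ∀ s ∈ Set.Icc (0:ℝ) t, f0 s = f s := by
    intro s hs
    simp only [hf0def, hcl]
    rw [max_eq_left hs.1, min_eq_left hs.2]
  -- basic monotonicity facts
  have hf0_le : ∀ s ∈ Set.Ioo (0:ℝ) t, f 0 ≤ f s := by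
    intro s hs
    have hsub : Set.Ioo (0:ℝ) s ⊆ Set.Icc (0:ℝ) t :=
      fun x hx => ⟨hx.1.le, le_trans hx.2.le hs.2.le⟩
    have hT : Filter.Tendsto f (nhdsWithin 0 (Set.Ioo (0:ℝ) s)) (nhds (f 0)) :=
      (hcont 0 ⟨le_refl 0, ht.le⟩).mono_left (nhdsWithin_mono 0 hsub)
    have : (nhdsWithin (0:ℝ) (Set.Ioo 0 s)).NeBot := left_nhdsWithin_Ioo_neBot hs.1
    refine le_of_tendsto hT ?_
    filter_upwards [self_mem_nhdsWithin] with x hx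
    exact (hmono ⟨hx.1, lt_trans hx.2 hs.2⟩ hs hx.2).le
  have hf_le_ft : ∀ s ∈ Set.Ioo (0:ℝ) t, f s ≤ f t := by
    intro s hs
    have hsub : Set.Ioo s t ⊆ Set.Icc (0:ℝ) t :=
      fun x hx => ⟨le_trans hs.1.le hx.1.le, hx.2.le⟩
    have hT : Filter.Tendsto f (nhdsWithin t (Set.Ioo s t)) (nhds (f t)) :=
      (hcont t ⟨ht.le, le_refl t⟩).mono_left (nhdsWithin_mono t hsub)
    have : (nhdsWithin t (Set.Ioo s t)).NeBot := right_nhdsWithin_Ioo_neBot hs.2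
    refine ge_of_tendsto hT ?_
    filter_upwards [self_mem_nhdsWithin] with x hx
    exact (hmono hs ⟨lt_trans hs.1 hx.1, hx.2⟩ hx.1).le
  have hf_lt_one : ∀ s ∈ Set.Ioo (0:ℝ) t, f s < 1 := by
    intro s hs
    have hmid : s < (s+t)/2 := by linarith [hs.2]
    have hmid2 : (s+t)/2 < t := by linarith [hs.1]
    have h1 := hmono hs ⟨by linarith [hs.1], hmid2⟩ hmid
    have h2 := (hmap ((s+t)/2) ⟨by linarith [hs.1], hmid2.le⟩).2
    linarith
  have hf0_nonneg : 0 ≤ f 0 := (hmap 0 ⟨le_refl 0, ht.le⟩).1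
  have hf0_lt_one : f 0 < 1 :=
    lt_of_le_of_lt (hf0_le (t/2) ⟨by linarith, by linarith⟩)
      (hf_lt_one (t/2) ⟨by linarith, by linarith⟩)
  have hfs_nonneg : ∀ s ∈ Set.Ioo (0:ℝ) t, 0 ≤ f s :=
    fun s hs => le_trans hf0_nonneg (hf0_le s hs)
  have harc0 : 0 ≤ Real.arcsin (f 0) := Real.arcsin_nonneg.2 hf0_nonneg
  have harcpi : Real.arcsin (f 0) < Real.pi/2 := Real.arcsin_lt_pi_div_two.2 hf0_lt_one
  have hlr : thetaA (f 0) ≤ 2*Real.pi - thetaA (f 0) := by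
    simp only [thetaA]; linarith
  -- the region, the density, the integrand
  set A : Set (ℝ×ℝ) := {p | p.1 ∈ Set.Ioo (0:ℝ) t ∧
    p.2 ∈ Set.Ioo (thetaA (f 0)) (2*Real.pi - thetaA (f 0)) ∧
    f0 p.1 < Real.sin (p.2/2)} with hAdef
  set d : ℝ×ℝ → ℝ := fun p =>
    1/(2*Real.pi) * Real.sin (p.2/2) / Real.sqrt (Real.sin (p.2/2)^2 - f0 p.1^2) with hddef
  set F : ℝ×ℝ → ℂ :=
    A.indicator (fun p => (d p : ℂ) * g (Complex.exp (p.2 * Complex.I))) with hFdef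
  have hAmeas : MeasurableSet A := by
    have : A = (Set.Ioo (0:ℝ) t ×ˢ Set.Ioo (thetaA (f 0)) (2*Real.pi - thetaA (f 0))) ∩
        {p : ℝ×ℝ | f0 p.1 < Real.sin (p.2/2)} := by
      ext p
      simp only [hAdef, Set.mem_setOf_eq, Set.mem_inter_iff, Set.mem_prod]
      tauto
    rw [this]
    exact (measurableSet_Ioo.prod measurableSet_Ioo).inter
      (isOpen_lt (hf0c.comp continuous_fst)
        (Real.continuous_sin.comp (continuous_snd.div_const 2))).measurableSet
  have hc1 : Continuous fun p : ℝ×ℝ => Real.sin (p.2/2) :=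
    Real.continuous_sin.comp (continuous_snd.div_const 2)
  have hc2 : Continuous fun p : ℝ×ℝ => Real.sqrt (Real.sin (p.2/2)^2 - f0 p.1^2) :=
    Real.continuous_sqrt.comp ((hc1.pow 2).sub ((hf0c.comp continuous_fst).pow 2))
  have hdmeas : Measurable d :=
    ((continuous_const.mul hc1).measurable).div hc2.measurable
  have hexpc : Continuous fun p : ℝ×ℝ => Complex.exp (↑p.2 * Complex.I) :=
    Complex.continuous_exp.comp ((Complex.continuous_ofReal.comp continuous_snd).mul
      continuous_const)
  have hFmeas : AEStronglyMeasurable F ((volume : Measure ℝ).prod (volume : Measure ℝ)) := by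
    refine (StronglyMeasurable.indicator ?_ hAmeas).aestronglyMeasurable
    exact ((Complex.measurable_ofReal.comp hdmeas).mul
      ((hg.comp hexpc).measurable)).stronglyMeasurable
  -- slice description in θ for fixed s
  have hS1 : ∀ s ∈ Set.Ioo (0:ℝ) t,
      {θ : ℝ | (s, θ) ∈ A} = Set.Ioo (thetaA (f s)) (2*Real.pi - thetaA (f s)) := by
    intro s hs
    have hfs0 : f0 s = f s := hf0eq s ⟨hs.1.le, hs.2.le⟩
    have h0le := hf0_le s hs
    have h1 := hf_lt_one s hs
    have hfsnn := hfs_nonneg s hs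
    have harcs0 : 0 ≤ Real.arcsin (f s) := Real.arcsin_nonneg.2 hfsnn
    have harcspi : Real.arcsin (f s) ≤ Real.pi/2 := Real.arcsin_le_pi_div_two _
    ext θ
    simp only [hAdef, Set.mem_setOf_eq, Set.mem_Ioo, thetaA, hfs0]
    constructor
    · rintro ⟨_, ⟨hθ1, hθ2⟩, hlt⟩
      have hx : θ/2 ∈ Set.Ioo 0 Real.pi := ⟨by linarith, by linarith⟩
      have hab := (lt_sin_iff' hfsnn h1.le hx).1 hlt
      exact ⟨by linarith [hab.1], by linarith [hab.2]⟩
    · rintro ⟨hθ1, hθ2⟩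
      have hx : θ/2 ∈ Set.Ioo 0 Real.pi := ⟨by linarith, by linarith⟩
      have hlt : f s < Real.sin (θ/2) :=
        (lt_sin_iff' hfsnn h1.le hx).2 ⟨by linarith, by linarith⟩
      have hlt0 : f 0 < Real.sin (θ/2) := lt_of_le_of_lt h0le hlt
      have hb := (lt_sin_iff' hf0_nonneg hf0_lt_one.le hx).1 hlt0
      exact ⟨hs, ⟨by linarith [hb.1], by linarith [hb.2]⟩, hlt⟩
  -- slice description in s for fixed θ
  have hS2 : ∀ θ ∈ Set.Ioo (thetaA (f 0)) (2*Real.pi - thetaA (f 0)),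
      {s : ℝ | (s, θ) ∈ A} = Set.Ioo 0 (u θ) ∧ u θ ∈ Set.Ioc 0 t := by
    intro θ hθ
    have hθ' : θ ∈ Set.Ioo (thetaA (f 0)) (2 * Real.pi - thetaA (f 0)) := hθ
    have hθ1 : thetaA (f 0) < θ := hθ.1
    have hθ2 : θ < 2*Real.pi - thetaA (f 0) := hθ.2
    have hl0 : 0 ≤ thetaA (f 0) := by simp only [thetaA]; linarith
    have hx : θ/2 ∈ Set.Ioo 0 Real.pi := by
      constructor
      · linarith
      · simp only [thetaA] at hθ2; linarith
    have hy : f 0 < Real.sin (θ/2) := by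
      apply (lt_sin_iff' hf0_nonneg hf0_lt_one.le hx).2
      simp only [thetaA] at hθ1 hθ2
      exact ⟨by linarith, by linarith⟩
    rcases le_or_gt (f t) (Real.sin (θ/2)) with hcase | hcase
    · have hut : u θ = t := (hu θ (by exact_mod_cast hθ')).1 hcase
      constructor
      · ext s
        simp only [hAdef, Set.mem_setOf_eq, Set.mem_Ioo, hut]
        constructor
        · rintro ⟨hs, _, _⟩; exact hs
        · intro hs
          have hfs0 : f0 s = f s := hf0eq s ⟨hs.1.le, hs.2.le⟩
          have hmid : s < (s+t)/2 := by linarith [hs.2]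
          have hmid2 : (s+t)/2 < t := by linarith [hs.1]
          have h1 := hmono hs ⟨by linarith [hs.1], hmid2⟩ hmid
          have h2 := hf_le_ft ((s+t)/2) ⟨by linarith [hs.1], hmid2⟩
          exact ⟨hs, hθ', by rw [hfs0]; linarith⟩
      · rw [hut]; exact ⟨ht, le_refl t⟩
    · obtain ⟨huθ, hfu⟩ := (hu θ hθ').2 hcase
      constructor
      · ext s
        simp only [hAdef, Set.mem_setOf_eq, Set.mem_Ioo]
        constructor
        · rintro ⟨hs, _, hlt⟩
          have hfs0 : f0 s = f s := hf0eq s ⟨hs.1.le, hs.2.le⟩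
          rw [hfs0] at hlt
          refine ⟨hs.1, ?_⟩
          by_contra hcon
          push_neg at hcon
          rcases eq_or_lt_of_le hcon with heq | hltu
          · rw [heq] at hfu; linarith
          · have := hmono huθ hs hltu; linarith
        · rintro ⟨hs1, hs2⟩
          have hst : s < t := lt_trans hs2 huθ.2
          have hfs0 : f0 s = f s := hf0eq s ⟨hs1.le, hst.le⟩
          have := hmono ⟨hs1, hst⟩ huθ hs2
          exact ⟨⟨hs1, hst⟩, hθ', by rw [hfs0]; linarith⟩
      · exact ⟨huθ.1, huθ.2.le⟩
  -- nonnegativity of the density on the arc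
  have hdnn : ∀ (s θ : ℝ), θ ∈ Set.Ioo (thetaA (f 0)) (2*Real.pi - thetaA (f 0)) →
      0 ≤ d (s, θ) := by
    intro s θ hθ
    have hl0 : 0 ≤ thetaA (f 0) := by simp only [thetaA]; linarith
    have hr0 : 2*Real.pi - thetaA (f 0) ≤ 2*Real.pi := by simp only [thetaA]; linarith
    have hsin : 0 ≤ Real.sin (θ/2) :=
      Real.sin_nonneg_of_nonneg_of_le_pi (by linarith [hθ.1]) (by linarith [hθ.2])
    simp only [hddef]
    apply div_nonneg (mul_nonneg (by positivity) hsin) (Real.sqrt_nonneg _)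
  -- FTC package for each s
  have hFTC : ∀ s ∈ Set.Ioo (0:ℝ) t,
      IntegrableOn (fun θ => d (s,θ)) (Set.Ioo (thetaA (f s)) (2*Real.pi - thetaA (f s))) ∧
      ∫ θ in Set.Ioo (thetaA (f s)) (2*Real.pi - thetaA (f s)), d (s,θ) = 1 := by
    intro s hs
    have hfs0 : f0 s = f s := hf0eq s ⟨hs.1.le, hs.2.le⟩
    have h1 := hf_lt_one s hs
    have hfsnn := hfs_nonneg s hs
    obtain ⟨hint, hval⟩ := density_FTC (f s) hfsnn h1
    have hdeq : (fun θ => d (s,θ)) = fun θ =>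
        (1/(2*Real.pi)) * (Real.sin (θ/2) / Real.sqrt (Real.sin (θ/2)^2 - (f s)^2)) := by
      funext θ
      simp only [hddef, hfs0]
      ring
    have hTA : thetaA (f s) = 2*Real.arcsin (f s) := rfl
    have hle2 : 2*Real.arcsin (f s) ≤ 2*Real.pi - 2*Real.arcsin (f s) := by
      have h2 := Real.arcsin_le_pi_div_two (f s)
      have h3 := Real.arcsin_nonneg.2 hfsnn
      linarith
    constructor
    · rw [hdeq, hTA]
      exact (hint.mono_set Set.Ioo_subset_Ioc_self).const_mul _
    · rw [hdeq, hTA]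
      rw [MeasureTheory.setIntegral_congr_set MeasureTheory.Ioo_ae_eq_Ioc]
      rw [MeasureTheory.integral_const_mul]
      rw [← intervalIntegral.integral_of_le hle2]
      rw [hval]
      field_simp
  -- slice identities for F
  have hFs1 : ∀ s ∈ Set.Ioo (0:ℝ) t, (fun θ => F (s,θ)) =
      (Set.Ioo (thetaA (f s)) (2*Real.pi - thetaA (f s))).indicator
        (fun θ => (d (s,θ) : ℂ) * g (Complex.exp (θ * Complex.I))) := by
    intro s hs
    funext θ
    have hmem : ((s,θ) ∈ A) ↔ θ ∈ Set.Ioo (thetaA (f s)) (2*Real.pi - thetaA (f s)) :=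
      (Set.ext_iff.1 (hS1 s hs) θ)
    by_cases h : (s,θ) ∈ A
    · rw [hFdef, Set.indicator_of_mem h, Set.indicator_of_mem (hmem.1 h)]
    · rw [hFdef, Set.indicator_of_notMem h,
        Set.indicator_of_notMem (fun hc => h (hmem.2 hc))]
  have hFs0 : ∀ (s : ℝ), s ∉ Set.Ioo (0:ℝ) t → ∀ θ, F (s,θ) = 0 := by
    intro s hs θ
    rw [hFdef, Set.indicator_of_notMem (fun hc => hs hc.1)]
  have hFt1 : ∀ θ ∈ Set.Ioo (thetaA (f 0)) (2*Real.pi - thetaA (f 0)), (fun s => F (s,θ)) =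
      (Set.Ioo (0:ℝ) (u θ)).indicator
        (fun s => (d (s,θ) : ℂ) * g (Complex.exp (θ * Complex.I))) := by
    intro θ hθ
    funext s
    have hmem : ((s,θ) ∈ A) ↔ s ∈ Set.Ioo (0:ℝ) (u θ) :=
      (Set.ext_iff.1 (hS2 θ hθ).1 s)
    by_cases h : (s,θ) ∈ A
    · rw [hFdef, Set.indicator_of_mem h, Set.indicator_of_mem (hmem.1 h)]
    · rw [hFdef, Set.indicator_of_notMem h,
        Set.indicator_of_notMem (fun hc => h (hmem.2 hc))]
  have hFt0 : ∀ (θ : ℝ), θ ∉ Set.Ioo (thetaA (f 0)) (2*Real.pi - thetaA (f 0)) →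
      ∀ s, F (s,θ) = 0 := by
    intro θ hθ s
    rw [hFdef, Set.indicator_of_notMem (fun hc => hθ hc.2.1)]
  -- bound on g over the circle
  obtain ⟨M, hM⟩ := (isCompact_sphere (0:ℂ) 1).exists_bound_of_continuousOn hg.continuousOn
  have hMg : ∀ θ:ℝ, ‖g (Complex.exp (θ*Complex.I))‖ ≤ M := by
    intro θ
    apply hM
    simp [mem_sphere_iff_norm, Complex.norm_exp_ofReal_mul_I]
  have hM0 : 0 ≤ M := le_trans (norm_nonneg _) (hMg 0)
  -- integrability of each θ-slice
  have hgc : ∀ θ:ℝ, Continuous fun _ : ℝ => g (Complex.exp (θ*Complex.I)) := by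
    intro θ; exact continuous_const
  have hsliceInt : ∀ s : ℝ, Integrable (fun θ => F (s,θ)) := by
    intro s
    by_cases hs : s ∈ Set.Ioo (0:ℝ) t
    · rw [hFs1 s hs, MeasureTheory.integrable_indicator_iff measurableSet_Ioo]
      have hd_int : IntegrableOn (fun θ => ((d (s,θ) : ℝ) : ℂ))
          (Set.Ioo (thetaA (f s)) (2*Real.pi - thetaA (f s))) := (hFTC s hs).1.ofReal
      have hgm : AEStronglyMeasurable (fun θ : ℝ => g (Complex.exp (θ*Complex.I)))
          ((volume : Measure ℝ).restrict (Set.Ioo (thetaA (f s)) (2*Real.pi - thetaA (f s)))) :=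
        (hg.comp (Complex.continuous_exp.comp
          (Complex.continuous_ofReal.mul continuous_const))).aestronglyMeasurable
      have := MeasureTheory.Integrable.bdd_mul hd_int hgm (Filter.Eventually.of_forall fun θ => hMg θ)
      exact this.congr (Filter.Eventually.of_forall fun θ => mul_comm _ _)
    · refine MeasureTheory.integrable_zero _ _ _ |>.congr ?_
      exact Filter.Eventually.of_forall fun θ => (hFs0 s hs θ).symm
  -- value of each s-slice integral : nuInt
  have hnu : ∀ s ∈ Set.Ioo (0:ℝ) t, nuInt (f s) g = ∫ θ, F (s,θ) := by
    intro s hs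
    have hfs0 : f0 s = f s := hf0eq s ⟨hs.1.le, hs.2.le⟩
    have h1 := hf_lt_one s hs
    have hfsnn := hfs_nonneg s hs
    have hle2 : thetaA (f s) ≤ 2*Real.pi - thetaA (f s) := by
      have h2 := Real.arcsin_le_pi_div_two (f s)
      have h3 := Real.arcsin_nonneg.2 hfsnn
      simp only [thetaA]; linarith
    have hcosrw : ∀ θ:ℝ, Real.cos (thetaA (f s)/2)^2 - Real.cos (θ/2)^2
        = Real.sin (θ/2)^2 - (f s)^2 := by
      intro θ
      have h1' : Real.cos (thetaA (f s)/2) = Real.sqrt (1 - (f s)^2) := by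
        rw [show thetaA (f s)/2 = Real.arcsin (f s) by simp only [thetaA]; ring,
          Real.cos_arcsin]
      rw [h1', Real.sq_sqrt (by nlinarith)]
      have := Real.sin_sq_add_cos_sq (θ/2)
      linarith
    have hRHS : ∫ θ, F (s,θ) = ∫ θ in Set.Ioo (thetaA (f s)) (2*Real.pi - thetaA (f s)),
        (d (s,θ) : ℂ) * g (Complex.exp (θ * Complex.I)) := by
      rw [hFs1 s hs, MeasureTheory.integral_indicator measurableSet_Ioo]
    rw [nuInt, if_neg (ne_of_lt h1), hRHS]
    simp only [hcosrw, hddef, hfs0]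
    rw [intervalIntegral.integral_of_le hle2]
    exact (MeasureTheory.setIntegral_congr_set MeasureTheory.Ioo_ae_eq_Ioc).symm
  -- value of each θ-slice integral
  have hsliceθ : ∀ θ ∈ Set.Ioo (thetaA (f 0)) (2*Real.pi - thetaA (f 0)),
      ∫ s, F (s,θ) = (((1/(2*Real.pi)) * ∫ s in (0:ℝ)..(u θ),
          Real.sin (θ/2) / Real.sqrt (Real.sin (θ/2)^2 - f s^2) : ℝ) : ℂ)
        * g (Complex.exp (θ * Complex.I)) := by
    intro θ hθ
    obtain ⟨hset, huθ⟩ := hS2 θ hθ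
    have heqd : ∫ s in (0:ℝ)..(u θ), d (s,θ)
        = (1/(2*Real.pi)) * ∫ s in (0:ℝ)..(u θ),
            Real.sin (θ/2) / Real.sqrt (Real.sin (θ/2)^2 - f s^2) := by
      rw [← intervalIntegral.integral_const_mul]
      apply intervalIntegral.integral_congr
      intro s hs'
      rw [Set.uIcc_of_le huθ.1.le] at hs'
      have hsmem : s ∈ Set.Icc (0:ℝ) t := ⟨hs'.1, le_trans hs'.2 huθ.2⟩
      simp only [hddef]
      rw [hf0eq s hsmem]
      ring
    calc ∫ s, F (s,θ)
        = ∫ s in Set.Ioo (0:ℝ) (u θ), (d (s,θ) : ℂ) * g (Complex.exp (θ*Complex.I)) := by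
          rw [hFt1 θ hθ, MeasureTheory.integral_indicator measurableSet_Ioo]
      _ = (∫ s in Set.Ioo (0:ℝ) (u θ), ((d (s,θ) : ℝ) : ℂ)) * g (Complex.exp (θ*Complex.I)) := by
          rw [MeasureTheory.integral_mul_const]
      _ = _ := by
          congr 1
          rw [show (∫ s in Set.Ioo (0:ℝ) (u θ), ((d (s,θ) : ℝ) : ℂ))
              = ((∫ s in Set.Ioo (0:ℝ) (u θ), d (s,θ) : ℝ) : ℂ) from integral_ofReal]
          rw [MeasureTheory.setIntegral_congr_set MeasureTheory.Ioo_ae_eq_Ioc,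
            ← intervalIntegral.integral_of_le huθ.1.le, heqd]
  -- integrability over the product
  have hINT : Integrable F ((volume : Measure ℝ).prod (volume : Measure ℝ)) := by
    rw [MeasureTheory.integrable_prod_iff hFmeas]
    constructor
    · exact Filter.Eventually.of_forall fun s => hsliceInt s
    · apply MeasureTheory.Integrable.mono'
        (g := (Set.Ioo (0:ℝ) t).indicator (fun _ => M))
        ((MeasureTheory.integrable_indicator_iff measurableSet_Ioo).2
          (MeasureTheory.integrableOn_const measure_Ioo_lt_top.ne))
        hFmeas.norm.integral_prod_right'
      apply Filter.Eventually.of_forall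
      intro s
      by_cases hs : s ∈ Set.Ioo (0:ℝ) t
      · rw [Set.indicator_of_mem hs]
        rw [Real.norm_of_nonneg (MeasureTheory.integral_nonneg fun θ => norm_nonneg _)]
        have h1 : (fun θ => ‖F (s,θ)‖) =
            (Set.Ioo (thetaA (f s)) (2*Real.pi - thetaA (f s))).indicator
              (fun θ => ‖(d (s,θ) : ℂ) * g (Complex.exp (θ * Complex.I))‖) := by
          funext θ
          rw [congrFun (hFs1 s hs) θ]
          exact norm_indicator_eq_indicator_norm _ θ
        rw [h1, MeasureTheory.integral_indicator measurableSet_Ioo]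
        have hIoo : IntegrableOn (fun θ => (d (s,θ) : ℂ) * g (Complex.exp (θ * Complex.I)))
            (Set.Ioo (thetaA (f s)) (2*Real.pi - thetaA (f s))) := by
          rw [← MeasureTheory.integrable_indicator_iff measurableSet_Ioo, ← hFs1 s hs]
          exact hsliceInt s
        have hsub : Set.Ioo (thetaA (f s)) (2*Real.pi - thetaA (f s)) ⊆
            Set.Ioo (thetaA (f 0)) (2*Real.pi - thetaA (f 0)) := by
          rw [← hS1 s hs]
          intro θ hθ
          exact hθ.2.1
        calc ∫ θ in Set.Ioo (thetaA (f s)) (2*Real.pi - thetaA (f s)),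
              ‖(d (s,θ) : ℂ) * g (Complex.exp (θ * Complex.I))‖
            ≤ ∫ θ in Set.Ioo (thetaA (f s)) (2*Real.pi - thetaA (f s)), M * d (s,θ) := by
              apply MeasureTheory.setIntegral_mono_on hIoo.norm
                ((hFTC s hs).1.const_mul M) measurableSet_Ioo
              intro θ hθ
              rw [norm_mul, Complex.norm_real, Real.norm_eq_abs,
                abs_of_nonneg (hdnn s θ (hsub hθ))]
              calc d (s,θ) * ‖g (Complex.exp (θ * Complex.I))‖
                  ≤ d (s,θ) * M := by
                    apply mul_le_mul_of_nonneg_left (hMg θ) (hdnn s θ (hsub hθ))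
                _ = M * d (s,θ) := mul_comm _ _
          _ = M * 1 := by rw [MeasureTheory.integral_const_mul, (hFTC s hs).2]
          _ = M := mul_one M
      · rw [Set.indicator_of_notMem hs]
        have hz : ∀ θ, F (s,θ) = 0 := hFs0 s hs
        simp [hz]
  -- now assemble everything
  have hne : ∀ᵐ x : ℝ ∂(volume : Measure ℝ), x ≠ t := by
    have hset : {x : ℝ | ¬ x ≠ t} = {t} := by ext x; simp
    rw [Filter.Eventually, MeasureTheory.mem_ae_iff]
    show (volume : Measure ℝ) {x : ℝ | x ≠ t}ᶜ = 0
    have : {x : ℝ | x ≠ t}ᶜ = {t} := by ext x; simp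
    rw [this]
    exact measure_singleton t
  have e1 : ∫ s in (0:ℝ)..t, nuInt (f s) g = ∫ s in (0:ℝ)..t, ∫ θ, F (s,θ) := by
    apply intervalIntegral.integral_congr_ae
    filter_upwards [hne] with x hx hxI
    rw [Set.uIoc_of_le ht.le] at hxI
    exact hnu x ⟨hxI.1, lt_of_le_of_ne hxI.2 hx⟩
  have e2 : ∫ s in (0:ℝ)..t, (∫ θ, F (s,θ)) = ∫ s, ∫ θ, F (s,θ) := by
    rw [intervalIntegral.integral_of_le ht.le]
    apply MeasureTheory.setIntegral_eq_integral_of_forall_compl_eq_zero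
    intro s hs
    have hs' : s ∉ Set.Ioo (0:ℝ) t := fun hc => hs (Set.Ioo_subset_Ioc_self hc)
    simp [hFs0 s hs']
  have e3 := MeasureTheory.integral_integral_swap (f := fun s θ => F (s,θ)) hINT
  have e4 : ∫ θ, (∫ s, F (s,θ)) = ∫ θ in thetaA (f 0)..(2*Real.pi - thetaA (f 0)),
      ∫ s, F (s,θ) := by
    rw [intervalIntegral.integral_of_le hlr]
    symm
    apply MeasureTheory.setIntegral_eq_integral_of_forall_compl_eq_zero
    intro θ hθ
    have hθ' : θ ∉ Set.Ioo (thetaA (f 0)) (2*Real.pi - thetaA (f 0)) :=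
      fun hc => hθ (Set.Ioo_subset_Ioc_self hc)
    simp [hFt0 θ hθ']
  rw [e1, e2, e3, e4, ← intervalIntegral.integral_const_mul]
  apply intervalIntegral.integral_congr_ae
  have hner : ∀ᵐ x : ℝ ∂(volume : Measure ℝ), x ≠ 2*Real.pi - thetaA (f 0) := by
    rw [Filter.Eventually, MeasureTheory.mem_ae_iff]
    show (volume : Measure ℝ) {x : ℝ | x ≠ 2*Real.pi - thetaA (f 0)}ᶜ = 0
    have hss : {x : ℝ | x ≠ 2*Real.pi - thetaA (f 0)}ᶜ = {2*Real.pi - thetaA (f 0)} := by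
      ext x; simp
    rw [hss]; exact measure_singleton _
  filter_upwards [hner] with θ hθne hθI
  rw [Set.uIoc_of_le hlr] at hθI
  have hθ : θ ∈ Set.Ioo (thetaA (f 0)) (2*Real.pi - thetaA (f 0)) :=
    ⟨hθI.1, lt_of_le_of_ne hθI.2 hθne⟩
  rw [hsliceθ θ hθ]
  have htne : (t:ℂ) ≠ 0 := Complex.ofReal_ne_zero.2 ht.ne'
  have hpne : ((Real.pi:ℝ):ℂ) ≠ 0 := Complex.ofReal_ne_zero.2 Real.pi_ne_zero
  push_cast
  field_simp

end
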